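/- Let p, q ≥ 0 with p+q ≥ 2, and let ℝ_G^{p+q+1} = {X ∈ ℝ^{p+q+1} : N(X) > 0}. Then the function H_{p,q}(X) = N(X)^{−(p+q−1)/2} satisfies □_{p,q} H_{p,q} = 0 on ℝ_G^{p+q+1}, and the 𝒜_{p,q}-valued function G_{p,q}(X) = N(X)^{−(p+q+1)/2} X⁺ equals (1−p−q)^{−1} ∇_{p,q}H_{p,q} and is both (p,q)-left-monogenic and (p,q)-right-monogenic on ℝ_G^{p+q+1}. -/

import Mathlib

open scoped BigOperators

/-- `N(X) = ∑_{j=0}^p x_j² - ∑_{j=p+1}^{p+q} x̃_j²` on `ℝ^{p+q+1}`. -/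
noncomputable def Npq (p q : ℕ) (X : Fin (p + q + 1) → ℝ) : ℝ :=
  ∑ j : Fin (p + q + 1), if (j : ℕ) ≤ p then X j ^ 2 else -(X j ^ 2)

/-- The domain `ℝ_G^{p+q+1} = {X : N(X) > 0}`. -/
def RG (p q : ℕ) : Set (Fin (p + q + 1) → ℝ) := {X | 0 < Npq p q X}

/-- The `j`-th partial derivative. -/
noncomputable def pdR {m : ℕ} {A : Type*} [NormedAddCommGroup A] [NormedSpace ℝ A]
    (f : (Fin m → ℝ) → A) (j : Fin m) (X : Fin m → ℝ) : A :=
  fderiv ℝ f X (Pi.single j 1)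

/-- Sign for `∇⁺_{p,q}` and `□_{p,q}`. -/
def sgnP (p : ℕ) {m : ℕ} (j : Fin m) : ℝ := if (j : ℕ) ≤ p then 1 else -1

/-- Sign for `∇_{p,q}`. -/
def sgnM (p : ℕ) {m : ℕ} (j : Fin m) : ℝ :=
  if (j : ℕ) = 0 then 1 else if (j : ℕ) ≤ p then -1 else 1

/-- The left Dirac operator `∇⁺_{p,q} f`. -/
noncomputable def diracPlusL (p q : ℕ) {A : Type*} [NormedRing A] [NormedAlgebra ℝ A]
    (e : Fin (p + q + 1) → A) (f : (Fin (p + q + 1) → ℝ) → A)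
    (X : Fin (p + q + 1) → ℝ) : A :=
  ∑ j, sgnP p j • (e j * pdR f j X)

/-- The left Dirac operator `∇_{p,q} f`. -/
noncomputable def diracMinusL (p q : ℕ) {A : Type*} [NormedRing A] [NormedAlgebra ℝ A]
    (e : Fin (p + q + 1) → A) (f : (Fin (p + q + 1) → ℝ) → A)
    (X : Fin (p + q + 1) → ℝ) : A :=
  ∑ j, sgnM p j • (e j * pdR f j X)

/-- The right Dirac operator `f ∇⁺_{p,q}`. -/
noncomputable def diracPlusR (p q : ℕ) {A : Type*} [NormedRing A] [NormedAlgebra ℝ A]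
    (e : Fin (p + q + 1) → A) (f : (Fin (p + q + 1) → ℝ) → A)
    (X : Fin (p + q + 1) → ℝ) : A :=
  ∑ j, sgnP p j • (pdR f j X * e j)

/-- The wave operator `□_{p,q}`. -/
noncomputable def waveOp (p q : ℕ) {A : Type*} [NormedAddCommGroup A] [NormedSpace ℝ A]
    (f : (Fin (p + q + 1) → ℝ) → A) (X : Fin (p + q + 1) → ℝ) : A :=
  ∑ j, sgnP p j • pdR (pdR f j) j X

/-- `X⁺ = x_0 e_0 - ∑_{j=1}^p x_j e_j - ∑ x̃_j ẽ_j`. -/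
noncomputable def XplusR {m : ℕ} {A : Type*} [NormedRing A] [NormedAlgebra ℝ A]
    (e : Fin m → A) (X : Fin m → ℝ) : A :=
  ∑ j : Fin m, (if (j : ℕ) = 0 then X j else -X j) • e j

/-- `H_{p,q}(X) = N(X)^{-(p+q-1)/2}` on `ℝ_G^{p+q+1}` (real power). -/
noncomputable def Hpq (p q : ℕ) (X : Fin (p + q + 1) → ℝ) : ℝ :=
  Real.rpow (Npq p q X) (-(((p : ℝ) + (q : ℝ) - 1) / 2))

/-- `G_{p,q}(X) = N(X)^{-(p+q+1)/2} X⁺`. -/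
noncomputable def Gpq (p q : ℕ) {A : Type*} [NormedRing A] [NormedAlgebra ℝ A]
    (e : Fin (p + q + 1) → A) (X : Fin (p + q + 1) → ℝ) : A :=
  Real.rpow (Npq p q X) (-(((p : ℝ) + (q : ℝ) + 1) / 2)) • XplusR e X

lemma Npq_eq (p q : ℕ) (X : Fin (p+q+1) → ℝ) :
    Npq p q X = ∑ j, sgnP p j * X j ^ 2 := by
  unfold Npq sgnP
  exact Finset.sum_congr rfl (fun j _ => by split <;> ring)

noncomputable def NL (p q : ℕ) (X : Fin (p+q+1) → ℝ) : (Fin (p+q+1) → ℝ) →L[ℝ] ℝ :=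
  ∑ j, (2 * sgnP p j * X j) • ContinuousLinearMap.proj j

lemma NL_single (p q : ℕ) (X : Fin (p+q+1) → ℝ) (j : Fin (p+q+1)) :
    NL p q X (Pi.single j 1) = 2 * sgnP p j * X j := by
  simp [NL, ContinuousLinearMap.sum_apply, Pi.single_apply]

lemma hasFDerivAt_Npq (p q : ℕ) (X : Fin (p+q+1) → ℝ) :
    HasFDerivAt (Npq p q) (NL p q X) X := by
  have hrw : Npq p q = fun Y => ∑ j, sgnP p j * Y j ^ 2 := funext (Npq_eq p q)
  rw [hrw]
  refine HasFDerivAt.fun_sum (fun j _ => ?_)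
  have h1 : HasFDerivAt (fun Y : Fin (p+q+1) → ℝ => Y j)
      (ContinuousLinearMap.proj (R := ℝ) j) X := hasFDerivAt_apply (𝕜 := ℝ) j X
  beta_reduce
  simp only [pow_two]
  have h2 := (h1.mul h1).const_mul (sgnP p j)
  simp only [Pi.mul_apply] at h2
  refine h2.congr_fderiv ?_
  ext v
  simp [ContinuousLinearMap.smul_apply]
  ring

lemma continuous_Npq (p q : ℕ) : Continuous (Npq p q) :=
  continuous_iff_continuousAt.2 fun X => (hasFDerivAt_Npq p q X).differentiableAt.continuousAt

lemma hasFDerivAt_NR (p q : ℕ) (c : ℝ) {X : Fin (p+q+1) → ℝ} (hX : Npq p q X ≠ 0) :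
    HasFDerivAt (fun Y => Npq p q Y ^ c)
      ((c * Npq p q X ^ (c - 1)) • NL p q X) X :=
  (hasFDerivAt_Npq p q X).rpow_const (Or.inl hX)
section deriv
variable {p q : ℕ}

lemma isOpen_RG (p q : ℕ) : IsOpen (RG p q) :=
  isOpen_lt continuous_const (continuous_Npq p q)

lemma pdR_NR_smul {A : Type*} [NormedRing A] [NormedAlgebra ℝ A] (p q : ℕ) (c : ℝ)
    {X : Fin (p+q+1) → ℝ} (hX : Npq p q X ≠ 0) (j : Fin (p+q+1)) (u : A) :
    pdR (fun Y => (Npq p q Y ^ c) • u) j X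
      = (c * Npq p q X ^ (c - 1) * (2 * sgnP p j * X j)) • u := by
  rw [pdR, ((hasFDerivAt_NR p q c hX).smul_const u).fderiv]
  rw [ContinuousLinearMap.smulRight_apply, ContinuousLinearMap.smul_apply, NL_single,
    smul_eq_mul]

noncomputable def DXp {m : ℕ} {A : Type*} [NormedRing A] [NormedAlgebra ℝ A]
    (e : Fin m → A) : (Fin m → ℝ) →L[ℝ] A :=
  ∑ k : Fin m, (((if (k : ℕ) = 0 then (1:ℝ) else -1) • ContinuousLinearMap.proj k).smulRight (e k))

lemma DXp_single {m : ℕ} {A : Type*} [NormedRing A] [NormedAlgebra ℝ A]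
    (e : Fin m → A) (j : Fin m) :
    DXp e (Pi.single j 1) = (if (j : ℕ) = 0 then (1:ℝ) else -1) • e j := by
  classical
  rw [DXp, ContinuousLinearMap.sum_apply]
  rw [Finset.sum_eq_single j]
  · split <;> simp
  · intro k _ hk
    split <;> simp [Pi.single_apply, Ne.symm hk]
  · simp

lemma hasFDerivAt_Xplus {m : ℕ} {A : Type*} [NormedRing A] [NormedAlgebra ℝ A]
    (e : Fin m → A) (X : Fin m → ℝ) : HasFDerivAt (XplusR e) (DXp e) X := by
  have hrw : XplusR e = fun Y : Fin m → ℝ =>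
      ∑ k : Fin m, ((if (k : ℕ) = 0 then (1:ℝ) else -1) * Y k) • e k := by
    funext Y
    refine Finset.sum_congr rfl fun k _ => ?_
    congr 1
    split <;> ring
  rw [hrw, DXp]
  refine HasFDerivAt.fun_sum fun k _ => ?_
  exact ((hasFDerivAt_apply (𝕜 := ℝ) k X).const_mul _).smul_const (e k)

lemma pdR_Gpq {A : Type*} [NormedRing A] [NormedAlgebra ℝ A] (p q : ℕ)
    (e : Fin (p+q+1) → A) {X : Fin (p+q+1) → ℝ} (hX : Npq p q X ≠ 0) (j : Fin (p+q+1)) :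
    pdR (Gpq p q e) j X
      = (Npq p q X ^ (-(((p : ℝ) + (q : ℝ) + 1) / 2)) * (if (j : ℕ) = 0 then (1:ℝ) else -1)) • e j
        + ((-(((p : ℝ) + (q : ℝ) + 1) / 2)) * Npq p q X ^ ((-(((p : ℝ) + (q : ℝ) + 1) / 2)) - 1)
            * (2 * sgnP p j * X j)) • XplusR e X := by
  have hG : HasFDerivAt (Gpq p q e)
      ((Npq p q X ^ (-(((p : ℝ) + (q : ℝ) + 1) / 2))) • DXp e
        + (((-(((p : ℝ) + (q : ℝ) + 1) / 2)) * Npq p q X ^ ((-(((p : ℝ) + (q : ℝ) + 1) / 2)) - 1))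
            • NL p q X).smulRight (XplusR e X)) X := by
    exact (hasFDerivAt_NR p q _ hX).smul (hasFDerivAt_Xplus e X)
  rw [pdR, hG.fderiv]
  rw [ContinuousLinearMap.add_apply, ContinuousLinearMap.smul_apply,
    ContinuousLinearMap.smulRight_apply, ContinuousLinearMap.smul_apply, NL_single,
    DXp_single, smul_smul, smul_eq_mul]
end deriv

section cliff
variable {p q : ℕ} {A : Type*} [NormedRing A] [NormedAlgebra ℝ A]
variable (e : Fin (p + q + 1) → A)

lemma pair_cancel
    (he0 : e 0 = 1)
    (hanti : ∀ j k : Fin (p + q + 1), j ≠ 0 → k ≠ 0 → j ≠ k → e j * e k = -(e k * e j))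
    (X : Fin (p + q + 1) → ℝ) (j k : Fin (p + q + 1)) (hjk : j ≠ k) :
    (X j * (if (k : ℕ) = 0 then X k else -X k)) • (e j * e k)
      + (X k * (if (j : ℕ) = 0 then X j else -X j)) • (e k * e j) = 0 := by
  have hv : ∀ i : Fin (p + q + 1), (i : ℕ) = 0 ↔ i = 0 := fun i => by
    rw [Fin.ext_iff]; simp
  have h00 : ((0 : Fin (p + q + 1)) : ℕ) = 0 := rfl
  by_cases hj : j = 0
  · subst hj
    have hk : ¬((k : ℕ) = 0) := fun h => hjk (((hv k).1 h).symm)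
    rw [if_neg hk, if_pos h00, he0, one_mul, mul_one]
    rw [← add_smul]
    have : X 0 * -X k + X k * X 0 = 0 := by ring
    rw [this, zero_smul]
  · by_cases hk : k = 0
    · subst hk
      have hj' : ¬((j : ℕ) = 0) := fun h => hj ((hv j).1 h)
      rw [if_pos h00, if_neg hj', he0, one_mul, mul_one]
      rw [← add_smul]
      have : X j * X 0 + X 0 * -X j = 0 := by ring
      rw [this, zero_smul]
    · have hj' : ¬((j : ℕ) = 0) := fun h => hj ((hv j).1 h)
      have hk' : ¬((k : ℕ) = 0) := fun h => hk ((hv k).1 h)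
      rw [if_neg hj', if_neg hk']
      rw [hanti k j hk hj (Ne.symm hjk), smul_neg, ← neg_smul, ← add_smul]
      have : X j * -X k + -(X k * -X j) = 0 := by ring
      rw [this, zero_smul]

lemma diag_term
    (he0 : e 0 = 1)
    (hsqNeg : ∀ j : Fin (p + q + 1), 1 ≤ (j : ℕ) → (j : ℕ) ≤ p → e j * e j = -1)
    (hsqPos : ∀ j : Fin (p + q + 1), p < (j : ℕ) → e j * e j = 1)
    (X : Fin (p + q + 1) → ℝ) (j : Fin (p + q + 1)) :
    (X j * (if (j : ℕ) = 0 then X j else -X j)) • (e j * e j)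
      = (sgnP p j * X j ^ 2) • (1 : A) := by
  by_cases hj : (j : ℕ) = 0
  · have hj0 : j = 0 := by rw [Fin.ext_iff]; simpa using hj
    subst hj0
    have h00 : ((0 : Fin (p + q + 1)) : ℕ) = 0 := rfl
    rw [if_pos h00, he0, one_mul, sgnP, if_pos (by simp)]
    congr 1; ring
  · rw [if_neg hj]
    by_cases hjp : (j : ℕ) ≤ p
    · rw [hsqNeg j (Nat.one_le_iff_ne_zero.2 hj) hjp, sgnP, if_pos hjp]
      rw [smul_neg, ← neg_smul]
      congr 1; ring
    · rw [hsqPos j (not_le.1 hjp), sgnP, if_neg hjp]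
      congr 1; ring
end cliff

section cliff2
variable {p q : ℕ} {A : Type*} [NormedRing A] [NormedAlgebra ℝ A]
variable (e : Fin (p + q + 1) → A)

lemma pair_cancel'
    (he0 : e 0 = 1)
    (hanti : ∀ j k : Fin (p + q + 1), j ≠ 0 → k ≠ 0 → j ≠ k → e j * e k = -(e k * e j))
    (X : Fin (p + q + 1) → ℝ) (j k : Fin (p + q + 1)) (hjk : j ≠ k) :
    ((if (j : ℕ) = 0 then X j else -X j) * X k) • (e j * e k)
      + ((if (k : ℕ) = 0 then X k else -X k) * X j) • (e k * e j) = 0 := by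
  have hv : ∀ i : Fin (p + q + 1), (i : ℕ) = 0 ↔ i = 0 := fun i => by
    rw [Fin.ext_iff]; simp
  have h00 : ((0 : Fin (p + q + 1)) : ℕ) = 0 := rfl
  by_cases hj : j = 0
  · subst hj
    have hk : ¬((k : ℕ) = 0) := fun h => hjk (((hv k).1 h).symm)
    rw [if_neg hk, if_pos h00, he0, one_mul, mul_one]
    rw [← add_smul]
    have : X 0 * X k + -X k * X 0 = 0 := by ring
    rw [this, zero_smul]
  · by_cases hk : k = 0
    · subst hk
      have hj' : ¬((j : ℕ) = 0) := fun h => hj ((hv j).1 h)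
      rw [if_pos h00, if_neg hj', he0, one_mul, mul_one]
      rw [← add_smul]
      have : -X j * X 0 + X 0 * X j = 0 := by ring
      rw [this, zero_smul]
    · have hj' : ¬((j : ℕ) = 0) := fun h => hj ((hv j).1 h)
      have hk' : ¬((k : ℕ) = 0) := fun h => hk ((hv k).1 h)
      rw [if_neg hj', if_neg hk']
      rw [hanti k j hk hj (Ne.symm hjk), smul_neg, ← neg_smul, ← add_smul]
      have : -X j * X k + -(-X k * X j) = 0 := by ring
      rw [this, zero_smul]

lemma sum_mul_Xplus
    (he0 : e 0 = 1)
    (hsqNeg : ∀ j : Fin (p + q + 1), 1 ≤ (j : ℕ) → (j : ℕ) ≤ p → e j * e j = -1)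
    (hsqPos : ∀ j : Fin (p + q + 1), p < (j : ℕ) → e j * e j = 1)
    (hanti : ∀ j k : Fin (p + q + 1), j ≠ 0 → k ≠ 0 → j ≠ k → e j * e k = -(e k * e j))
    (X : Fin (p + q + 1) → ℝ) :
    (∑ j, X j • e j) * XplusR e X = Npq p q X • (1 : A) := by
  classical
  rw [XplusR, Finset.sum_mul]
  simp_rw [Finset.mul_sum, smul_mul_smul_comm]
  rw [← Finset.sum_product' (f := fun j k : Fin (p+q+1) =>
      (X j * (if (k : ℕ) = 0 then X k else -X k)) • (e j * e k))]
  rw [← Finset.diag_union_offDiag (Finset.univ : Finset (Fin (p+q+1))),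
      Finset.sum_union (Finset.disjoint_diag_offDiag _), Finset.sum_diag]
  have hoff : ∑ x ∈ (Finset.univ : Finset (Fin (p+q+1))).offDiag,
      (X x.1 * (if (x.2 : ℕ) = 0 then X x.2 else -X x.2)) • (e x.1 * e x.2) = 0 := by
    refine Finset.sum_involution (fun a _ => a.swap) ?_ ?_ ?_ ?_
    · intro a ha
      exact pair_cancel e he0 hanti X a.1 a.2 (Finset.mem_offDiag.1 ha).2.2
    · intro a ha _
      have := (Finset.mem_offDiag.1 ha).2.2
      intro hco
      exact this (congrArg Prod.snd hco)
    · intro a ha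
      rcases Finset.mem_offDiag.1 ha with ⟨_, _, hne⟩
      exact Finset.mem_offDiag.2 ⟨Finset.mem_univ _, Finset.mem_univ _, hne.symm⟩
    · intro a ha; rfl
  rw [hoff, add_zero]
  rw [Finset.sum_congr rfl (fun j _ => diag_term e he0 hsqNeg hsqPos X j),
      ← Finset.sum_smul, ← Npq_eq]

lemma Xplus_mul
    (he0 : e 0 = 1)
    (hsqNeg : ∀ j : Fin (p + q + 1), 1 ≤ (j : ℕ) → (j : ℕ) ≤ p → e j * e j = -1)
    (hsqPos : ∀ j : Fin (p + q + 1), p < (j : ℕ) → e j * e j = 1)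
    (hanti : ∀ j k : Fin (p + q + 1), j ≠ 0 → k ≠ 0 → j ≠ k → e j * e k = -(e k * e j))
    (X : Fin (p + q + 1) → ℝ) :
    XplusR e X * (∑ j, X j • e j) = Npq p q X • (1 : A) := by
  classical
  rw [XplusR, Finset.sum_mul]
  simp_rw [Finset.mul_sum, smul_mul_smul_comm]
  rw [← Finset.sum_product' (f := fun j k : Fin (p+q+1) =>
      ((if (j : ℕ) = 0 then X j else -X j) * X k) • (e j * e k))]
  rw [← Finset.diag_union_offDiag (Finset.univ : Finset (Fin (p+q+1))),
      Finset.sum_union (Finset.disjoint_diag_offDiag _), Finset.sum_diag]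
  have hoff : ∑ x ∈ (Finset.univ : Finset (Fin (p+q+1))).offDiag,
      ((if (x.1 : ℕ) = 0 then X x.1 else -X x.1) * X x.2) • (e x.1 * e x.2) = 0 := by
    refine Finset.sum_involution (fun a _ => a.swap) ?_ ?_ ?_ ?_
    · intro a ha
      exact pair_cancel' e he0 hanti X a.1 a.2 (Finset.mem_offDiag.1 ha).2.2
    · intro a ha _
      have := (Finset.mem_offDiag.1 ha).2.2
      intro hco
      exact this (congrArg Prod.snd hco)
    · intro a ha
      rcases Finset.mem_offDiag.1 ha with ⟨_, _, hne⟩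
      exact Finset.mem_offDiag.2 ⟨Finset.mem_univ _, Finset.mem_univ _, hne.symm⟩
    · intro a ha; rfl
  rw [hoff, add_zero]
  have hdiag : ∀ j : Fin (p+q+1),
      ((if (j : ℕ) = 0 then X j else -X j) * X j) • (e j * e j)
        = (sgnP p j * X j ^ 2) • (1 : A) := by
    intro j
    rw [mul_comm]
    exact diag_term e he0 hsqNeg hsqPos X j
  rw [Finset.sum_congr rfl (fun j _ => hdiag j), ← Finset.sum_smul, ← Npq_eq]
end cliff2

/-- on `ℝ_G^{p+q+1}` (where `N(X) > 0`), `H_{p,q}` satisfies the wave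
equation `□_{p,q} H_{p,q} = 0`, and `G_{p,q} = (1-p-q)⁻¹ ∇_{p,q} H_{p,q}` is both
`(p,q)`-left-monogenic and `(p,q)`-right-monogenic. -/
theorem Hpq_wave_and_Gpq_monogenic {A : Type*} [NormedRing A] [NormedAlgebra ℝ A]
    (p q : ℕ) (hpq : 2 ≤ p + q)
    (e : Fin (p + q + 1) → A) (he0 : e 0 = 1)
    (hsqNeg : ∀ j : Fin (p + q + 1), 1 ≤ (j : ℕ) → (j : ℕ) ≤ p → e j * e j = -1)
    (hsqPos : ∀ j : Fin (p + q + 1), p < (j : ℕ) → e j * e j = 1)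
    (hanti : ∀ j k : Fin (p + q + 1), j ≠ 0 → k ≠ 0 → j ≠ k → e j * e k = -(e k * e j)) :
    ∀ X ∈ RG p q,
      waveOp p q (fun Y => Hpq p q Y • (1 : A)) X = 0 ∧
      Gpq p q e X =
        (1 - (p : ℝ) - (q : ℝ))⁻¹ • diracMinusL p q e (fun Y => Hpq p q Y • (1 : A)) X ∧
      diracPlusL p q e (Gpq p q e) X = 0 ∧
      diracPlusR p q e (Gpq p q e) X = 0 := by
  intro X hX
  have hN : 0 < Npq p q X := hX
  have hNne : Npq p q X ≠ 0 := ne_of_gt hN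
  have h2a : (1 : ℝ) - (p : ℝ) - (q : ℝ) ≠ 0 := by
    have : (2 : ℝ) ≤ (p : ℝ) + (q : ℝ) := by exact_mod_cast hpq
    intro h; linarith
  -- notation
  have hv0 : ∀ i : Fin (p + q + 1), (i : ℕ) = 0 ↔ i = 0 := fun i => by
    rw [Fin.ext_iff]; simp
  refine ⟨?_, ?_, ?_, ?_⟩
  · -- wave equation
    unfold waveOp
    have hmem : RG p q ∈ nhds X := (isOpen_RG p q).mem_nhds hX
    have hev : ∀ j : Fin (p+q+1), (fun Y => pdR (fun Z => Hpq p q Z • (1:A)) j Y)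
        =ᶠ[nhds X] fun Y => ((-(((p : ℝ) + (q : ℝ) - 1) / 2)) * Npq p q Y ^ ((-(((p : ℝ) + (q : ℝ) - 1) / 2)) - 1) * (2 * sgnP p j * Y j)) • (1:A) := by
      intro j
      filter_upwards [hmem] with Y hY
      exact pdR_NR_smul p q (-(((p : ℝ) + (q : ℝ) - 1) / 2)) (ne_of_gt hY) j (1:A)
    have hsecond : ∀ j : Fin (p+q+1),
        pdR (pdR (fun Z => Hpq p q Z • (1:A)) j) j X
        = (((-(((p : ℝ) + (q : ℝ) - 1) / 2)) * Npq p q X ^ ((-(((p : ℝ) + (q : ℝ) - 1) / 2)) - 1)) * (2 * sgnP p j)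
            + (2 * sgnP p j * X j)
              * ((-(((p : ℝ) + (q : ℝ) - 1) / 2)) • (((-(((p : ℝ) + (q : ℝ) - 1) / 2)) - 1) * Npq p q X ^ ((-(((p : ℝ) + (q : ℝ) - 1) / 2)) - 1 - 1) * (2 * sgnP p j * X j)))) • (1:A) := by
      intro j
      rw [pdR, (hev j).fderiv_eq]
      have h1 : HasFDerivAt (fun Y : Fin (p+q+1) → ℝ => (-(((p : ℝ) + (q : ℝ) - 1) / 2)) * Npq p q Y ^ ((-(((p : ℝ) + (q : ℝ) - 1) / 2)) - 1))
          ((-(((p : ℝ) + (q : ℝ) - 1) / 2)) • ((((-(((p : ℝ) + (q : ℝ) - 1) / 2)) - 1) * Npq p q X ^ ((-(((p : ℝ) + (q : ℝ) - 1) / 2)) - 1 - 1)) • NL p q X)) X :=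
        (hasFDerivAt_NR p q ((-(((p : ℝ) + (q : ℝ) - 1) / 2)) - 1) hNne).const_mul (-(((p : ℝ) + (q : ℝ) - 1) / 2))
      have h2 : HasFDerivAt (fun Y : Fin (p+q+1) → ℝ => 2 * sgnP p j * Y j)
          ((2 * sgnP p j) • ContinuousLinearMap.proj (R := ℝ) j) X :=
        (hasFDerivAt_apply (𝕜 := ℝ) j X).const_mul _
      have h3 := (h1.mul h2).smul_const (1:A)
      simp only [Pi.mul_apply] at h3
      rw [h3.fderiv]
      simp only [ContinuousLinearMap.smulRight_apply, ContinuousLinearMap.add_apply,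
        ContinuousLinearMap.smul_apply, NL_single, ContinuousLinearMap.proj_apply,
        Pi.single_eq_same, smul_eq_mul]
      congr 1
      ring
    have hterm : ∀ j : Fin (p+q+1),
        sgnP p j • pdR (pdR (fun Z => Hpq p q Z • (1:A)) j) j X
        = (2 * (-(((p : ℝ) + (q : ℝ) - 1) / 2)) * Npq p q X ^ ((-(((p : ℝ) + (q : ℝ) - 1) / 2)) - 1)
            + (4 * (-(((p : ℝ) + (q : ℝ) - 1) / 2)) * ((-(((p : ℝ) + (q : ℝ) - 1) / 2)) - 1) * Npq p q X ^ ((-(((p : ℝ) + (q : ℝ) - 1) / 2)) - 1 - 1)) * (sgnP p j * X j ^ 2)) • (1:A) := by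
      intro j
      rw [hsecond j, smul_smul]
      congr 1
      simp only [smul_eq_mul]
      unfold sgnP
      split_ifs <;> ring
    rw [Finset.sum_congr rfl (fun j _ => hterm j), ← Finset.sum_smul,
      Finset.sum_add_distrib, Finset.sum_const, ← Finset.mul_sum, ← Npq_eq,
      Finset.card_univ, Fintype.card_fin, nsmul_eq_mul]
    have hup : Npq p q X ^ ((-(((p : ℝ) + (q : ℝ) - 1) / 2)) - 1 - 1) * Npq p q X = Npq p q X ^ ((-(((p : ℝ) + (q : ℝ) - 1) / 2)) - 1) := by
      have h := Real.rpow_add_one hNne ((-(((p : ℝ) + (q : ℝ) - 1) / 2)) - 1 - 1)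
      rw [show (-(((p : ℝ) + (q : ℝ) - 1) / 2)) - 1 - 1 + 1 = (-(((p : ℝ) + (q : ℝ) - 1) / 2)) - 1 from by ring] at h
      rw [← h]
    have hz : ((p+q+1 : ℕ) : ℝ) * (2 * (-(((p : ℝ) + (q : ℝ) - 1) / 2)) * Npq p q X ^ ((-(((p : ℝ) + (q : ℝ) - 1) / 2)) - 1))
        + (4 * (-(((p : ℝ) + (q : ℝ) - 1) / 2)) * ((-(((p : ℝ) + (q : ℝ) - 1) / 2)) - 1) * Npq p q X ^ ((-(((p : ℝ) + (q : ℝ) - 1) / 2)) - 1 - 1)) * Npq p q X = 0 := by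
      calc ((p+q+1 : ℕ) : ℝ) * (2 * (-(((p : ℝ) + (q : ℝ) - 1) / 2)) * Npq p q X ^ ((-(((p : ℝ) + (q : ℝ) - 1) / 2)) - 1))
            + (4 * (-(((p : ℝ) + (q : ℝ) - 1) / 2)) * ((-(((p : ℝ) + (q : ℝ) - 1) / 2)) - 1) * Npq p q X ^ ((-(((p : ℝ) + (q : ℝ) - 1) / 2)) - 1 - 1)) * Npq p q X
          = ((p+q+1 : ℕ) : ℝ) * (2 * (-(((p : ℝ) + (q : ℝ) - 1) / 2)) * Npq p q X ^ ((-(((p : ℝ) + (q : ℝ) - 1) / 2)) - 1))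
            + (4 * (-(((p : ℝ) + (q : ℝ) - 1) / 2)) * ((-(((p : ℝ) + (q : ℝ) - 1) / 2)) - 1)) * (Npq p q X ^ ((-(((p : ℝ) + (q : ℝ) - 1) / 2)) - 1 - 1) * Npq p q X) := by ring
        _ = ((p+q+1 : ℕ) : ℝ) * (2 * (-(((p : ℝ) + (q : ℝ) - 1) / 2)) * Npq p q X ^ ((-(((p : ℝ) + (q : ℝ) - 1) / 2)) - 1))
            + (4 * (-(((p : ℝ) + (q : ℝ) - 1) / 2)) * ((-(((p : ℝ) + (q : ℝ) - 1) / 2)) - 1)) * Npq p q X ^ ((-(((p : ℝ) + (q : ℝ) - 1) / 2)) - 1) := by rw [hup]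
        _ = 0 := by push_cast; ring
    rw [hz, zero_smul]
  · -- G = (1-p-q)⁻¹ • ∇H
    unfold diracMinusL
    have hterm : ∀ j : Fin (p+q+1),
        sgnM p j • (e j * pdR (fun Y => Hpq p q Y • (1:A)) j X)
        = (sgnM p j * ((-(((p : ℝ) + (q : ℝ) - 1) / 2)) * Npq p q X ^ ((-(((p : ℝ) + (q : ℝ) - 1) / 2)) - 1) * (2 * sgnP p j * X j))) • e j := by
      intro j
      have hp := pdR_NR_smul p q (-(((p : ℝ) + (q : ℝ) - 1) / 2)) hNne j (1:A)
      rw [show (fun Y => Hpq p q Y • (1:A)) = (fun Y => (Npq p q Y ^ (-(((p : ℝ) + (q : ℝ) - 1) / 2))) • (1:A)) from rfl,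
        hp, mul_smul_comm, mul_one, smul_smul]
    rw [Finset.sum_congr rfl (fun j _ => hterm j)]
    rw [Gpq, XplusR, Finset.smul_sum, Finset.smul_sum]
    refine Finset.sum_congr rfl fun j _ => ?_
    rw [smul_smul, smul_smul]
    congr 1
    rw [show (-(((p : ℝ) + (q : ℝ) - 1) / 2)) - 1 = (-(((p : ℝ) + (q : ℝ) + 1) / 2)) from by ring,
      show Real.rpow (Npq p q X) (-(((p : ℝ) + (q : ℝ) + 1) / 2)) = Npq p q X ^ (-(((p : ℝ) + (q : ℝ) + 1) / 2)) from rfl]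
    unfold sgnM sgnP
    split_ifs with h1 h2 h3
    · field_simp
      ring
    · omega
    · field_simp
      ring
    · field_simp
      ring
  · -- left monogenic
    unfold diracPlusL
    have hup : Npq p q X ^ ((-(((p : ℝ) + (q : ℝ) + 1) / 2)) - 1) * Npq p q X = Npq p q X ^ (-(((p : ℝ) + (q : ℝ) + 1) / 2)) := by
      have h := Real.rpow_add_one hNne ((-(((p : ℝ) + (q : ℝ) + 1) / 2)) - 1)
      rw [show (-(((p : ℝ) + (q : ℝ) + 1) / 2)) - 1 + 1 = (-(((p : ℝ) + (q : ℝ) + 1) / 2)) from by ring] at h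
      rw [← h]
    have hterm : ∀ j : Fin (p+q+1), sgnP p j • (e j * pdR (Gpq p q e) j X)
        = (Npq p q X ^ (-(((p : ℝ) + (q : ℝ) + 1) / 2))) • (1 : A)
          + ((2 * (-(((p : ℝ) + (q : ℝ) + 1) / 2)) * Npq p q X ^ ((-(((p : ℝ) + (q : ℝ) + 1) / 2)) - 1)) * X j) • (e j * XplusR e X) := by
      intro j
      rw [pdR_Gpq p q e hNne j, mul_add, mul_smul_comm, mul_smul_comm, smul_add,
        smul_smul, smul_smul]
      congr 1
      · by_cases hj0 : (j : ℕ) = 0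
        · have hj : j = 0 := (hv0 j).1 hj0
          subst hj
          rw [if_pos hj0, sgnP, if_pos (by omega : ((0 : Fin (p+q+1)) : ℕ) ≤ p), he0, one_mul,
            mul_one, mul_one]
        · rw [if_neg hj0]
          by_cases hjp : (j : ℕ) ≤ p
          · rw [sgnP, if_pos hjp, hsqNeg j (by omega) hjp, smul_neg, ← neg_smul]
            congr 1; ring
          · rw [sgnP, if_neg hjp, hsqPos j (by omega)]
            congr 1; ring
      · congr 1
        unfold sgnP
        split_ifs <;> ring
    rw [Finset.sum_congr rfl (fun j _ => hterm j), Finset.sum_add_distrib, Finset.sum_const]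
    have hsum2 : ∑ j : Fin (p+q+1), ((2 * (-(((p : ℝ) + (q : ℝ) + 1) / 2)) * Npq p q X ^ ((-(((p : ℝ) + (q : ℝ) + 1) / 2)) - 1)) * X j) • (e j * XplusR e X)
        = (2 * (-(((p : ℝ) + (q : ℝ) + 1) / 2)) * Npq p q X ^ ((-(((p : ℝ) + (q : ℝ) + 1) / 2)) - 1)) • ((∑ j : Fin (p+q+1), X j • e j) * XplusR e X) := by
      rw [Finset.sum_congr rfl (fun j _ => by
        rw [mul_smul, ← smul_mul_assoc] :
          ∀ j ∈ Finset.univ, ((2 * (-(((p : ℝ) + (q : ℝ) + 1) / 2)) * Npq p q X ^ ((-(((p : ℝ) + (q : ℝ) + 1) / 2)) - 1)) * X j) • (e j * XplusR e X)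
            = (2 * (-(((p : ℝ) + (q : ℝ) + 1) / 2)) * Npq p q X ^ ((-(((p : ℝ) + (q : ℝ) + 1) / 2)) - 1)) • ((X j • e j) * XplusR e X)),
        ← Finset.smul_sum, ← Finset.sum_mul]
    rw [hsum2, sum_mul_Xplus e he0 hsqNeg hsqPos hanti X, smul_smul,
      Finset.card_univ, Fintype.card_fin, ← Nat.cast_smul_eq_nsmul ℝ, smul_smul, ← add_smul]
    have hz : ((p+q+1 : ℕ) : ℝ) * Npq p q X ^ (-(((p : ℝ) + (q : ℝ) + 1) / 2))
        + 2 * (-(((p : ℝ) + (q : ℝ) + 1) / 2)) * Npq p q X ^ ((-(((p : ℝ) + (q : ℝ) + 1) / 2)) - 1) * Npq p q X = 0 := by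
      calc ((p+q+1 : ℕ) : ℝ) * Npq p q X ^ (-(((p : ℝ) + (q : ℝ) + 1) / 2))
            + 2 * (-(((p : ℝ) + (q : ℝ) + 1) / 2)) * Npq p q X ^ ((-(((p : ℝ) + (q : ℝ) + 1) / 2)) - 1) * Npq p q X
          = ((p+q+1 : ℕ) : ℝ) * Npq p q X ^ (-(((p : ℝ) + (q : ℝ) + 1) / 2))
            + 2 * (-(((p : ℝ) + (q : ℝ) + 1) / 2)) * (Npq p q X ^ ((-(((p : ℝ) + (q : ℝ) + 1) / 2)) - 1) * Npq p q X) := by ring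
        _ = ((p+q+1 : ℕ) : ℝ) * Npq p q X ^ (-(((p : ℝ) + (q : ℝ) + 1) / 2)) + 2 * (-(((p : ℝ) + (q : ℝ) + 1) / 2)) * Npq p q X ^ (-(((p : ℝ) + (q : ℝ) + 1) / 2)) := by rw [hup]
        _ = 0 := by push_cast; ring
    rw [hz, zero_smul]
  · -- right monogenic
    unfold diracPlusR
    have hup : Npq p q X ^ ((-(((p : ℝ) + (q : ℝ) + 1) / 2)) - 1) * Npq p q X = Npq p q X ^ (-(((p : ℝ) + (q : ℝ) + 1) / 2)) := by
      have h := Real.rpow_add_one hNne ((-(((p : ℝ) + (q : ℝ) + 1) / 2)) - 1)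
      rw [show (-(((p : ℝ) + (q : ℝ) + 1) / 2)) - 1 + 1 = (-(((p : ℝ) + (q : ℝ) + 1) / 2)) from by ring] at h
      rw [← h]
    have hterm : ∀ j : Fin (p+q+1), sgnP p j • (pdR (Gpq p q e) j X * e j)
        = (Npq p q X ^ (-(((p : ℝ) + (q : ℝ) + 1) / 2))) • (1 : A)
          + ((2 * (-(((p : ℝ) + (q : ℝ) + 1) / 2)) * Npq p q X ^ ((-(((p : ℝ) + (q : ℝ) + 1) / 2)) - 1)) * X j) • (XplusR e X * e j) := by
      intro j
      rw [pdR_Gpq p q e hNne j, add_mul, smul_mul_assoc, smul_mul_assoc, smul_add,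
        smul_smul, smul_smul]
      congr 1
      · by_cases hj0 : (j : ℕ) = 0
        · have hj : j = 0 := (hv0 j).1 hj0
          subst hj
          rw [if_pos hj0, sgnP, if_pos (by omega : ((0 : Fin (p+q+1)) : ℕ) ≤ p), he0, one_mul,
            mul_one, mul_one]
        · rw [if_neg hj0]
          by_cases hjp : (j : ℕ) ≤ p
          · rw [sgnP, if_pos hjp, hsqNeg j (by omega) hjp, smul_neg, ← neg_smul]
            congr 1; ring
          · rw [sgnP, if_neg hjp, hsqPos j (by omega)]
            congr 1; ring
      · congr 1
        unfold sgnP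
        split_ifs <;> ring
    rw [Finset.sum_congr rfl (fun j _ => hterm j), Finset.sum_add_distrib, Finset.sum_const]
    have hsum2 : ∑ j : Fin (p+q+1), ((2 * (-(((p : ℝ) + (q : ℝ) + 1) / 2)) * Npq p q X ^ ((-(((p : ℝ) + (q : ℝ) + 1) / 2)) - 1)) * X j) • (XplusR e X * e j)
        = (2 * (-(((p : ℝ) + (q : ℝ) + 1) / 2)) * Npq p q X ^ ((-(((p : ℝ) + (q : ℝ) + 1) / 2)) - 1)) • (XplusR e X * (∑ j : Fin (p+q+1), X j • e j)) := by
      rw [Finset.sum_congr rfl (fun j _ => by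
        rw [mul_smul, ← mul_smul_comm] :
          ∀ j ∈ Finset.univ, ((2 * (-(((p : ℝ) + (q : ℝ) + 1) / 2)) * Npq p q X ^ ((-(((p : ℝ) + (q : ℝ) + 1) / 2)) - 1)) * X j) • (XplusR e X * e j)
            = (2 * (-(((p : ℝ) + (q : ℝ) + 1) / 2)) * Npq p q X ^ ((-(((p : ℝ) + (q : ℝ) + 1) / 2)) - 1)) • (XplusR e X * (X j • e j))),
        ← Finset.smul_sum, ← Finset.mul_sum]
    rw [hsum2, Xplus_mul e he0 hsqNeg hsqPos hanti X, smul_smul,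
      Finset.card_univ, Fintype.card_fin, ← Nat.cast_smul_eq_nsmul ℝ, smul_smul, ← add_smul]
    have hz : ((p+q+1 : ℕ) : ℝ) * Npq p q X ^ (-(((p : ℝ) + (q : ℝ) + 1) / 2))
        + 2 * (-(((p : ℝ) + (q : ℝ) + 1) / 2)) * Npq p q X ^ ((-(((p : ℝ) + (q : ℝ) + 1) / 2)) - 1) * Npq p q X = 0 := by
      calc ((p+q+1 : ℕ) : ℝ) * Npq p q X ^ (-(((p : ℝ) + (q : ℝ) + 1) / 2))
            + 2 * (-(((p : ℝ) + (q : ℝ) + 1) / 2)) * Npq p q X ^ ((-(((p : ℝ) + (q : ℝ) + 1) / 2)) - 1) * Npq p q X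
          = ((p+q+1 : ℕ) : ℝ) * Npq p q X ^ (-(((p : ℝ) + (q : ℝ) + 1) / 2))
            + 2 * (-(((p : ℝ) + (q : ℝ) + 1) / 2)) * (Npq p q X ^ ((-(((p : ℝ) + (q : ℝ) + 1) / 2)) - 1) * Npq p q X) := by ring
        _ = ((p+q+1 : ℕ) : ℝ) * Npq p q X ^ (-(((p : ℝ) + (q : ℝ) + 1) / 2)) + 2 * (-(((p : ℝ) + (q : ℝ) + 1) / 2)) * Npq p q X ^ (-(((p : ℝ) + (q : ℝ) + 1) / 2)) := by rw [hup]
        _ = 0 := by push_cast; ring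
    rw [hz, zero_smul]
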